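/- Law of total variance bound for Markov chains: let π be a policy with value function v^π satisfying v^π(s) ∈ [0, 1/(1−γ)], let P^π be its transition matrix, and define σ^π(s) = Var_{s' ∼ P(·|s,π(s))}[v^π(s')]. Then Σ_{t=0}^{∞} γ^{2t} (P^π)^t σ^π ≤ (1/(1−γ))^2 · 𝟙 entrywise, where 𝟙 is the all-ones vector. -/

import Mathlib

lemma mulVec_comb_aux {S : Type} [Fintype S] (B : Matrix S S ℝ) (f g h : S → ℝ)
    (a b c : ℝ) (s : S) :
    B.mulVec (fun x => a * f x + b * g x + c * h x) s
      = a * B.mulVec f s + b * B.mulVec g s + c * B.mulVec h s := by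
  simp only [Matrix.mulVec, dotProduct, Finset.mul_sum, ← Finset.sum_add_distrib]
  exact Finset.sum_congr rfl fun x _ => by ring

lemma mulVec_sum_aux {S : Type} [Fintype S] (B : Matrix S S ℝ) (n : ℕ)
    (c : ℕ → ℝ) (w : ℕ → S → ℝ) (s : S) :
    B.mulVec (fun x => ∑ t ∈ Finset.range n, c t * w t x) s
      = ∑ t ∈ Finset.range n, c t * B.mulVec (w t) s := by
  simp only [Matrix.mulVec, dotProduct, Finset.mul_sum]
  rw [Finset.sum_comm]
  exact Finset.sum_congr rfl fun t _ => Finset.sum_congr rfl fun x _ => by ring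

theorem law_of_total_variance_bound
    {S A : Type} [Fintype S] [DecidableEq S]
    (r : S → A → ℝ) (P : S → A → S → ℝ) (γ : ℝ)
    (hγ0 : 0 < γ) (hγ1 : γ < 1)
    (hr : ∀ s a, r s a ∈ Set.Icc (0:ℝ) 1)
    (hP0 : ∀ s a s', 0 ≤ P s a s') (hP1 : ∀ s a, ∑ s', P s a s' = 1)
    (π : S → A)
    (Pπ : Matrix S S ℝ) (hPπ : ∀ s s', Pπ s s' = P s (π s) s')
    (vπ : S → ℝ)
    (hfix : ∀ s, vπ s = r s (π s) + γ * ∑ s', P s (π s) s' * vπ s')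
    (hv : ∀ s, vπ s ∈ Set.Icc (0:ℝ) (1 / (1 - γ)))
    (σπ : S → ℝ)
    (hσ : ∀ s, σπ s = ∑ s', P s (π s) s' * (vπ s')^2
      - (∑ s', P s (π s) s' * vπ s')^2) :
    ∀ s, ∑' t : ℕ, γ ^ (2 * t) * ((Pπ ^ t).mulVec σπ s)
      ≤ (1 / (1 - γ))^2 := by
  have h1γ : 0 < 1 - γ := by linarith
  set M : ℝ := 1 / (1 - γ) with hMdef
  have hMpos : 0 < M := by positivity
  have hM1 : (1 - γ) * M = 1 := by rw [hMdef]; field_simp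
  have hγ2 : γ ^ 2 < 1 := by nlinarith
  have hγ2' : 0 ≤ γ ^ 2 := sq_nonneg γ
  have hpow : ∀ k : ℕ, γ ^ (2 * (k + 1)) = γ ^ 2 * γ ^ (2 * k) := by
    intro k; rw [mul_add, mul_one, pow_add]; ring
  -- basic facts on Pπ
  have hB0 : ∀ s s', 0 ≤ Pπ s s' := by
    intro s s'; rw [hPπ]; exact hP0 s (π s) s'
  have hB1 : ∀ s, ∑ s', Pπ s s' = 1 := by
    intro s; simp only [hPπ]; exact hP1 s (π s)
  have hBt0 : ∀ t s s', 0 ≤ (Pπ ^ t) s s' := by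
    intro t
    induction t with
    | zero => intro s s'; by_cases h : s = s' <;> simp [Matrix.one_apply, h]
    | succ n ih =>
      intro s s'
      rw [pow_succ, Matrix.mul_apply]
      exact Finset.sum_nonneg fun k _ => mul_nonneg (ih s k) (hB0 k s')
  have hBt1 : ∀ t s, ∑ s', (Pπ ^ t) s s' = 1 := by
    intro t
    induction t with
    | zero => intro s; simp [Matrix.one_apply]
    | succ n ih =>
      intro s
      simp only [pow_succ, Matrix.mul_apply]
      rw [Finset.sum_comm]
      have e : ∀ k, ∑ s', (Pπ ^ n) s k * Pπ k s' = (Pπ ^ n) s k := by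
        intro k; rw [← Finset.mul_sum, hB1, mul_one]
      rw [Finset.sum_congr rfl fun k _ => e k]
      exact ih s
  -- bounds on vπ
  have hv0 : ∀ s, 0 ≤ vπ s := fun s => (hv s).1
  have hvM : ∀ s, vπ s ≤ M := fun s => (hv s).2
  -- row averaging bound
  have hrow : ∀ (W f : S → ℝ), (∀ s', 0 ≤ W s') → (∑ s', W s' = 1) →
      ∀ a b : ℝ, (∀ s', a ≤ f s') → (∀ s', f s' ≤ b) →
      a ≤ ∑ s', W s' * f s' ∧ ∑ s', W s' * f s' ≤ b := by
    intro W f hW0 hW1 a b hfa hfb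
    constructor
    · calc a = ∑ s', W s' * a := by rw [← Finset.sum_mul, hW1, one_mul]
        _ ≤ ∑ s', W s' * f s' :=
          Finset.sum_le_sum fun s' _ => mul_le_mul_of_nonneg_left (hfa s') (hW0 s')
    · calc ∑ s', W s' * f s' ≤ ∑ s', W s' * b :=
          Finset.sum_le_sum fun s' _ => mul_le_mul_of_nonneg_left (hfb s') (hW0 s')
        _ = b := by rw [← Finset.sum_mul, hW1, one_mul]
  -- μ
  set μ : S → ℝ := Pπ.mulVec vπ with hμdef
  have hμ : ∀ s, μ s = ∑ s', Pπ s s' * vπ s' := fun s => rfl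
  have hμ0 : ∀ s, 0 ≤ μ s := by
    intro s; rw [hμ]
    exact (hrow _ _ (hB0 s) (hB1 s) 0 M hv0 hvM).1
  have hμM : ∀ s, μ s ≤ M := by
    intro s; rw [hμ]
    exact (hrow _ _ (hB0 s) (hB1 s) 0 M hv0 hvM).2
  -- Bellman
  have hBell : ∀ s, vπ s = r s (π s) + γ * μ s := by
    intro s; rw [hfix s, hμ]
    congr 1
    rw [mul_eq_mul_left_iff]
    left
    exact Finset.sum_congr rfl fun s' _ => by rw [hPπ]
  -- key scalar inequality : v² - γ²μ² + γ²Mμ ≤ Mv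
  have hkey : ∀ s, vπ s ^ 2 - γ ^ 2 * μ s ^ 2 + γ ^ 2 * M * μ s ≤ M * vπ s := by
    intro s
    have hb := hBell s
    have hr0 := (hr s (π s)).1
    have hr1 := (hr s (π s)).2
    have hu0 := hμ0 s
    have huM := hμM s
    have hvM' := hvM s
    have hv0' := hv0 s
    nlinarith [mul_nonneg hr0 hu0, mul_nonneg hr0 (sub_nonneg.2 huM),
      mul_nonneg (mul_nonneg hr0 (sub_nonneg.2 hr1)) (sub_nonneg.2 huM),
      mul_nonneg (mul_nonneg hr0 (sub_nonneg.2 hr1)) hu0,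
      mul_nonneg hu0 (sub_nonneg.2 huM), sq_nonneg (vπ s - γ * μ s),
      mul_nonneg (mul_nonneg hγ0.le hu0) (sub_nonneg.2 huM)]
  -- σπ in matrix form
  have hσπ : ∀ s, σπ s = Pπ.mulVec (fun s' => vπ s' ^ 2) s - μ s ^ 2 := by
    intro s; rw [hσ s, hμ]
    have e1 : ∑ s', P s (π s) s' * vπ s' ^ 2 = ∑ s', Pπ s s' * vπ s' ^ 2 :=
      Finset.sum_congr rfl fun s' _ => by rw [hPπ]
    have e2 : ∑ s', P s (π s) s' * vπ s' = ∑ s', Pπ s s' * vπ s' :=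
      Finset.sum_congr rfl fun s' _ => by rw [hPπ]
    rw [e1, e2]; rfl
  have hσabs : ∀ s, |σπ s| ≤ M ^ 2 := by
    intro s
    rw [hσπ s]
    have h1 := hrow _ (fun s' => vπ s' ^ 2) (hB0 s) (hB1 s) 0 (M ^ 2)
      (fun s' => sq_nonneg _)
      (fun s' => by show vπ s' ^ 2 ≤ M ^ 2; nlinarith [hv0 s', hvM s'])
    have h2 : 0 ≤ μ s ^ 2 ∧ μ s ^ 2 ≤ M ^ 2 :=
      ⟨sq_nonneg _, by nlinarith [hμ0 s, hμM s]⟩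
    have h1' : 0 ≤ Pπ.mulVec (fun s' => vπ s' ^ 2) s ∧
        Pπ.mulVec (fun s' => vπ s' ^ 2) s ≤ M ^ 2 := h1
    rw [abs_le]
    constructor <;> nlinarith [h1'.1, h1'.2, h2.1, h2.2]
  -- monotonicity of mulVec
  have hmono : ∀ (f g : S → ℝ), (∀ s', f s' ≤ g s') → ∀ s, Pπ.mulVec f s ≤ Pπ.mulVec g s := by
    intro f g hfg s
    exact Finset.sum_le_sum fun s' _ => mul_le_mul_of_nonneg_left (hfg s') (hB0 s s')
  -- the partial sums
  set F : ℕ → S → ℝ := fun n s => ∑ t ∈ Finset.range n, γ ^ (2 * t) * (Pπ ^ t).mulVec σπ s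
    with hFdef
  have hFrec : ∀ n s, F (n + 1) s = σπ s + γ ^ 2 * Pπ.mulVec (F n) s := by
    intro n s
    have hlin : Pπ.mulVec (F n) s
        = ∑ t ∈ Finset.range n, γ ^ (2 * t) * Pπ.mulVec ((Pπ ^ t).mulVec σπ) s :=
      mulVec_sum_aux Pπ n (fun t => γ ^ (2 * t)) (fun t => (Pπ ^ t).mulVec σπ) s
    simp only [hFdef]
    rw [Finset.sum_range_succ']
    simp only [Nat.mul_zero, pow_zero, one_mul, Matrix.one_mulVec]
    rw [add_comm]
    congr 1
    rw [hlin, Finset.mul_sum]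
    refine Finset.sum_congr rfl fun t _ => ?_
    rw [Matrix.mulVec_mulVec, ← pow_succ', hpow t]
    ring
  -- induction bound
  have hind : ∀ n s, F n s ≤ M * μ s + (-1) * μ s ^ 2
      + γ ^ (2 * n) * (Pπ ^ n).mulVec (fun s' => μ s' ^ 2) s := by
    intro n
    induction n with
    | zero =>
      intro s
      simp only [hFdef, Finset.range_zero, Finset.sum_empty, Nat.mul_zero, pow_zero,
        Matrix.one_mulVec, one_mul]
      nlinarith [hμ0 s, hμM s]
    | succ n ih =>
      intro s
      rw [hFrec n s]
      have step1 : Pπ.mulVec (F n) s ≤ Pπ.mulVec (fun s' => M * μ s' + (-1) * μ s' ^ 2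
          + γ ^ (2 * n) * (Pπ ^ n).mulVec (fun s'' => μ s'' ^ 2) s') s :=
        hmono _ _ (fun s' => ih s') s
      have step2 : Pπ.mulVec (fun s' => M * μ s' + (-1) * μ s' ^ 2
          + γ ^ (2 * n) * (Pπ ^ n).mulVec (fun s'' => μ s'' ^ 2) s') s
          = M * Pπ.mulVec μ s + (-1) * Pπ.mulVec (fun s' => μ s' ^ 2) s
          + γ ^ (2 * n) * Pπ.mulVec ((Pπ ^ n).mulVec (fun s'' => μ s'' ^ 2)) s :=
        mulVec_comb_aux Pπ μ (fun s' => μ s' ^ 2)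
          ((Pπ ^ n).mulVec (fun s'' => μ s'' ^ 2)) M (-1) (γ ^ (2 * n)) s
      have step3 : Pπ.mulVec ((Pπ ^ n).mulVec (fun s'' => μ s'' ^ 2)) s
          = (Pπ ^ (n + 1)).mulVec (fun s'' => μ s'' ^ 2) s := by
        rw [Matrix.mulVec_mulVec, ← pow_succ']
      -- key vector inequality
      have hkv : σπ s + γ ^ 2 * (M * Pπ.mulVec μ s + (-1) * Pπ.mulVec (fun s' => μ s' ^ 2) s)
          ≤ M * μ s + (-1) * μ s ^ 2 := by
        rw [hσπ s]
        have hMv : M * μ s = Pπ.mulVec (fun s' => M * vπ s') s := by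
          rw [hμ]
          simp only [Matrix.mulVec, dotProduct, Finset.mul_sum]
          exact Finset.sum_congr rfl fun s' _ => by ring
        have hcomb : Pπ.mulVec (fun s' => vπ s' ^ 2) s
            + γ ^ 2 * (M * Pπ.mulVec μ s + (-1) * Pπ.mulVec (fun s' => μ s' ^ 2) s)
            = Pπ.mulVec (fun s' => (γ ^ 2 * M) * μ s' + (-(γ ^ 2)) * μ s' ^ 2
              + 1 * vπ s' ^ 2) s := by
          rw [mulVec_comb_aux Pπ μ (fun s' => μ s' ^ 2) (fun s' => vπ s' ^ 2)
            (γ ^ 2 * M) (-(γ ^ 2)) 1 s]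
          ring
        have hpt : ∀ s', (γ ^ 2 * M) * μ s' + (-(γ ^ 2)) * μ s' ^ 2 + 1 * vπ s' ^ 2
            ≤ M * vπ s' := by
          intro s'; have := hkey s'; linarith
        have hmle := hmono _ _ hpt s
        rw [hMv]
        linarith [hcomb ▸ hmle, hcomb]
      have hγ2nn : 0 ≤ γ ^ 2 := hγ2'
      calc σπ s + γ ^ 2 * Pπ.mulVec (F n) s
          ≤ σπ s + γ ^ 2 * (M * Pπ.mulVec μ s + (-1) * Pπ.mulVec (fun s' => μ s' ^ 2) s
            + γ ^ (2 * n) * Pπ.mulVec ((Pπ ^ n).mulVec (fun s'' => μ s'' ^ 2)) s) := by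
            have h := step2 ▸ step1
            nlinarith [h]
        _ = (σπ s + γ ^ 2 * (M * Pπ.mulVec μ s + (-1) * Pπ.mulVec (fun s' => μ s' ^ 2) s))
            + γ ^ (2 * (n + 1)) * (Pπ ^ (n + 1)).mulVec (fun s'' => μ s'' ^ 2) s := by
            rw [← step3, hpow n]; ring
        _ ≤ M * μ s + (-1) * μ s ^ 2
            + γ ^ (2 * (n + 1)) * (Pπ ^ (n + 1)).mulVec (fun s'' => μ s'' ^ 2) s := by
            linarith [hkv]
  -- clean bound on partial sums
  have hFn : ∀ n s, F n s ≤ M ^ 2 / 4 + (γ ^ 2) ^ n * M ^ 2 := by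
    intro n s
    have h1 := hind n s
    have h2 : (Pπ ^ n).mulVec (fun s' => μ s' ^ 2) s ≤ M ^ 2 :=
      (hrow _ _ (hBt0 n s) (hBt1 n s) 0 (M ^ 2) (fun s' => sq_nonneg _)
        (fun s' => by show μ s' ^ 2 ≤ M ^ 2; nlinarith [hμ0 s', hμM s'])).2
    have h2' : 0 ≤ (Pπ ^ n).mulVec (fun s' => μ s' ^ 2) s :=
      (hrow _ _ (hBt0 n s) (hBt1 n s) 0 (M ^ 2) (fun s' => sq_nonneg _)
        (fun s' => by show μ s' ^ 2 ≤ M ^ 2; nlinarith [hμ0 s', hμM s'])).1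
    have h3 : M * μ s - μ s ^ 2 ≤ M ^ 2 / 4 := by nlinarith [sq_nonneg (M / 2 - μ s)]
    have h4 : γ ^ (2 * n) = (γ ^ 2) ^ n := by rw [← pow_mul]
    have h5 : (0:ℝ) ≤ (γ ^ 2) ^ n := pow_nonneg hγ2' n
    rw [h4] at h1
    nlinarith [h1, h2, h2', h3, h5]
  intro s
  -- summability
  have hsum : Summable fun t : ℕ => γ ^ (2 * t) * (Pπ ^ t).mulVec σπ s := by
    apply Summable.of_norm_bounded (g := fun t : ℕ => (γ ^ 2) ^ t * M ^ 2)
      ((summable_geometric_of_lt_one hγ2' hγ2).mul_right (M ^ 2))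
    intro t
    have hbd : |(Pπ ^ t).mulVec σπ s| ≤ M ^ 2 := by
      rw [abs_le]
      exact ⟨(hrow _ _ (hBt0 t s) (hBt1 t s) (-(M ^ 2)) (M ^ 2)
          (fun s' => neg_le_of_abs_le (hσabs s')) (fun s' => le_of_abs_le (hσabs s'))).1,
        (hrow _ _ (hBt0 t s) (hBt1 t s) (-(M ^ 2)) (M ^ 2)
          (fun s' => neg_le_of_abs_le (hσabs s')) (fun s' => le_of_abs_le (hσabs s'))).2⟩
    have hnorm : ‖γ ^ (2 * t) * (Pπ ^ t).mulVec σπ s‖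
        = γ ^ (2 * t) * |(Pπ ^ t).mulVec σπ s| := by
      rw [Real.norm_eq_abs, abs_mul, abs_of_nonneg (pow_nonneg hγ0.le _)]
    rw [hnorm, pow_mul]
    exact mul_le_mul_of_nonneg_left hbd (pow_nonneg hγ2' t)
  have htend := hsum.hasSum.tendsto_sum_nat
  have htend' : Filter.Tendsto (fun n => F n s) Filter.atTop
      (nhds (∑' t : ℕ, γ ^ (2 * t) * (Pπ ^ t).mulVec σπ s)) := htend
  have hclim : Filter.Tendsto (fun n : ℕ => M ^ 2 / 4 + (γ ^ 2) ^ n * M ^ 2)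
      Filter.atTop (nhds (M ^ 2 / 4 + 0 * M ^ 2)) :=
    Filter.Tendsto.add tendsto_const_nhds
      ((tendsto_pow_atTop_nhds_zero_of_lt_one hγ2' hγ2).mul_const (M ^ 2))
  have hle : (∑' t : ℕ, γ ^ (2 * t) * (Pπ ^ t).mulVec σπ s) ≤ M ^ 2 / 4 + 0 * M ^ 2 :=
    le_of_tendsto_of_tendsto' htend' hclim fun n => hFn n s
  have hfin : M ^ 2 / 4 + 0 * M ^ 2 ≤ M ^ 2 := by nlinarith [sq_nonneg M]
  calc (∑' t : ℕ, γ ^ (2 * t) * (Pπ ^ t).mulVec σπ s) ≤ M ^ 2 / 4 + 0 * M ^ 2 := hle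
    _ ≤ M ^ 2 := hfin
    _ = (1 / (1 - γ)) ^ 2 := by rw [hMdef]
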